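/- Let a ≠ b be distinct positive integers, (sₖ)_{k≥1} positive integers, and for ℓ = ℓ_k + t (where ℓ_k = s₂ + ⋯ + s_k, ℓ₁ = 0, 1 ≤ t ≤ s_{k+1}) let x_ℓ denote the integer triple corresponding to the symmetric matrix M_k^t M'_{k-1}. Then for every k ≥ 3: det(x_{ℓ_k}, x_{ℓ_k+1}, x_{ℓ_k+2}) = ±(b-a); in particular the three consecutive points x_{ℓ_k}, x_{ℓ_k+1}, x_{ℓ_k+2} are linearly independent over ℚ. -/

import Mathlib

/-- The matrix associated to a word over distinct positive integers. -/
def wordMatrix (m : List ℤ) : Matrix (Fin 2) (Fin 2) ℤ :=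
  (m.map fun ℓ => !![ℓ, 1; 1, 0]).prod

/-- The triple `(x₀, x₁, x₂)` associated to a symmetric matrix `(x₀ x₁; x₁ x₂)`. -/
def triple (N : Matrix (Fin 2) (Fin 2) ℤ) : Fin 3 → ℤ :=
  ![N 0 0, N 0 1, N 1 1]

namespace Stmt18aux
open Matrix
abbrev M2 := Matrix (Fin 2) (Fin 2) ℚ
def castM : Matrix (Fin 2) (Fin 2) ℤ →+* M2 := RingHom.mapMatrix (Int.castRingHom ℚ)

def Aq (α : ℚ) : M2 := !![α, 1; 1, 0]
def Ai (α : ℚ) : M2 := !![0, 1; 1, -α]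

lemma AAi (α : ℚ) : Aq α * Ai α = 1 := by
  rw [Aq, Ai, Matrix.mul_fin_two, Matrix.one_fin_two]; norm_num
lemma AiA (α : ℚ) : Ai α * Aq α = 1 := by
  rw [Aq, Ai, Matrix.mul_fin_two, Matrix.one_fin_two]; norm_num
lemma AAi_cancel (α : ℚ) (X : M2) : Aq α * (Ai α * X) = X := by
  rw [← mul_assoc, AAi, one_mul]
lemma AiA_cancel (α : ℚ) (X : M2) : Ai α * (Aq α * X) = X := by
  rw [← mul_assoc, AiA, one_mul]
lemma swap_pow (N : M2) (n : ℕ) (X : M2) : N * (N ^ n * X) = N ^ n * (N * X) := by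
  rw [← mul_assoc, ← pow_succ', pow_succ, mul_assoc]
lemma det_Aq (α : ℚ) : (Aq α).det = -1 := by simp [Aq, Matrix.det_fin_two_of]

lemma wm_nil : wordMatrix [] = 1 := by simp [wordMatrix]
lemma wm_cons (x : ℤ) (l : List ℤ) :
    wordMatrix (x :: l) = !![x, 1; 1, 0] * wordMatrix l := by simp [wordMatrix]
lemma wm_append (u v : List ℤ) : wordMatrix (u ++ v) = wordMatrix u * wordMatrix v := by
  simp [wordMatrix]
lemma wm_replicate (n : ℕ) (x : ℤ) :
    wordMatrix (List.replicate n x) = !![x, 1; 1, 0] ^ n := by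
  induction n with
  | zero => simp [wm_nil]
  | succ n ih => rw [List.replicate_succ, wm_cons, ih, pow_succ']
lemma wm_flatten (n : ℕ) (l : List ℤ) :
    wordMatrix (List.replicate n l).flatten = wordMatrix l ^ n := by
  induction n with
  | zero => simp [wm_nil]
  | succ n ih => rw [List.replicate_succ, List.flatten_cons, wm_append, ih, pow_succ']
lemma castM_single (x : ℤ) : castM !![x, 1; 1, 0] = Aq (x : ℚ) := by
  ext i j; fin_cases i <;> fin_cases j <;> simp [castM, Aq]
lemma wm_single (x : ℤ) : wordMatrix [x] = !![x, 1; 1, 0] := by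
  simp [wordMatrix]
lemma wm_pair (x y : ℤ) : wordMatrix [x, y] = !![x, 1; 1, 0] * !![y, 1; 1, 0] := by
  rw [wm_cons, wm_single]
lemma wm_det (l : List ℤ) : (wordMatrix l).det = 1 ∨ (wordMatrix l).det = -1 := by
  induction l with
  | nil => left; simp [wm_nil]
  | cons x l ih =>
    rw [wm_cons, Matrix.det_mul]
    have h : (!![x, 1; 1, 0] : Matrix (Fin 2) (Fin 2) ℤ).det = -1 := by
      simp [Matrix.det_fin_two_of]
    rw [h]
    rcases ih with h' | h' <;> rw [h'] <;> simp

lemma drop2 (p : List ℤ) (x y : ℤ) : (p ++ [x, y]).dropLast.dropLast = p := by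
  rw [show p ++ [x, y] = (p ++ [x]) ++ [y] by simp, List.dropLast_concat,
    List.dropLast_concat]

/-- Cayley–Hamilton for 2×2 rational matrices. -/
lemma CH2 (M : M2) : M * M = M.trace • M - M.det • 1 := by
  ext i j
  fin_cases i <;> fin_cases j <;>
    simp [Matrix.mul_apply, Fin.sum_univ_succ, Matrix.trace_fin_two, Matrix.det_fin_two,
      Matrix.one_apply] <;> ring

def tq (N : M2) : Fin 3 → ℚ := ![N 0 0, N 0 1, N 1 1]

def D3 (u v w : Fin 3 → ℚ) : ℚ := (Matrix.of ![u, v, w]).det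

lemma D3_swap13 (u v w : Fin 3 → ℚ) : D3 u v w = -D3 w v u := by
  simp [D3, Matrix.det_fin_three]; ring

lemma D3_step (τ δ : ℚ) (w : Fin 3 → ℚ) (X Y : M2) :
    D3 w (tq (τ • Y - δ • X)) (tq Y) = δ * D3 w (tq Y) (tq X) := by
  simp [D3, tq, Matrix.det_fin_three]; ring

lemma D3_last (τ δ : ℚ) (u : Fin 3 → ℚ) (X Y : M2) :
    D3 u (tq Y) (tq (τ • Y - δ • X)) = -δ * D3 u (tq Y) (tq X) := by
  simp [D3, tq, Matrix.det_fin_three]; ring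

lemma D3_step' (τ δ : ℚ) (w : Fin 3 → ℚ) (X Y : M2) :
    D3 (tq Y) (tq (τ • Y - δ • X)) w = δ * D3 (tq X) (tq Y) w := by
  simp [D3, tq, Matrix.det_fin_three]; ring

lemma pow_chain (M S : M2) (t : ℕ) :
    M ^ (t + 2) * S = M.trace • (M ^ (t + 1) * S) - M.det • (M ^ t * S) := by
  have h : M ^ (t + 2) = M.trace • M ^ (t + 1) - M.det • M ^ t := by
    calc M ^ (t + 2) = M ^ t * (M * M) := by rw [pow_add, sq]
    _ = M ^ t * (M.trace • M - M.det • 1) := by rw [CH2]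
    _ = M.trace • M ^ (t + 1) - M.det • M ^ t := by
        rw [mul_sub, mul_smul_comm, mul_smul_comm, pow_succ, mul_one]
  rw [h, sub_mul, smul_mul_assoc, smul_mul_assoc]

lemma chain_fst (M S : M2) (w : Fin 3 → ℚ) (t : ℕ) :
    D3 w (tq (M ^ (t + 1) * S)) (tq (M ^ t * S)) =
      M.det ^ t * D3 w (tq (M * S)) (tq S) := by
  induction t with
  | zero => simp
  | succ t ih =>
    rw [show t + 1 + 1 = t + 2 from rfl, pow_chain, D3_step, ih, pow_succ]
    ring

lemma chain_lst (M S : M2) (w : Fin 3 → ℚ) (t : ℕ) :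
    D3 (tq (M ^ t * S)) (tq (M ^ (t + 1) * S)) w =
      M.det ^ t * D3 (tq S) (tq (M * S)) w := by
  induction t with
  | zero => simp
  | succ t ih =>
    rw [show t + 1 + 1 = t + 2 from rfl, pow_chain, D3_step', ih, pow_succ]
    ring

lemma pm_pow {x : ℚ} (hx : x = 1 ∨ x = -1) (t : ℕ) : x ^ t = 1 ∨ x ^ t = -1 := by
  rcases hx with h | h
  · left; rw [h, one_pow]
  · subst h
    rcases Nat.even_or_odd t with he | ho
    · left; exact he.neg_one_pow
    · right; exact ho.neg_one_pow

section
variable {a b : ℤ} {s : ℕ → ℕ} {m : ℕ → List ℤ}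

def R (m : ℕ → List ℤ) (k : ℕ) : M2 := castM (wordMatrix (m k))

def Ci (a b : ℤ) (k : ℕ) : M2 :=
  if Even k then Ai (b : ℚ) * Ai (a : ℚ) else Ai (a : ℚ) * Ai (b : ℚ)

def W (a b : ℤ) (m : ℕ → List ℤ) (k : ℕ) : M2 := R m k * Ci a b k

lemma Ci_add_two (a b : ℤ) (k : ℕ) : Ci a b (k + 2) = Ci a b k := by
  simp [Ci, Nat.even_add_one, Nat.even_add]

lemma detR (m : ℕ → List ℤ) (k : ℕ) : (R m k).det = 1 ∨ (R m k).det = -1 := by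
  rw [R, castM, ← RingHom.map_det]
  rcases wm_det (m k) with h | h <;> rw [h] <;> simp

lemma hR0 (hm0 : m 0 = [b]) : R m 0 = Aq (b : ℚ) := by
  rw [R, hm0, wm_single, castM_single]

lemma hR1 (hm1 : m 1 = List.replicate (s 1 - 1) b ++ [a]) :
    R m 1 = Aq (b : ℚ) ^ (s 1 - 1) * Aq (a : ℚ) := by
  rw [R, hm1, wm_append, wm_replicate, wm_single, _root_.map_mul, map_pow, castM_single,
    castM_single]

lemma hRrec (hmr : ∀ k : ℕ, 1 ≤ k →
      m (k + 1) = (List.replicate (s (k + 1)) (m k)).flatten ++ m (k - 1)) (k : ℕ) :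
    R m (k + 2) = R m (k + 1) ^ s (k + 2) * R m k := by
  have h : m (k + 2) = (List.replicate (s (k + 2)) (m (k + 1))).flatten ++ m k := by
    have h0 := hmr (k + 1) (by omega)
    simp only [Nat.add_sub_cancel] at h0
    exact h0
  rw [R, h, wm_append, wm_flatten, _root_.map_mul, map_pow]
  rfl

lemma lemX (hm0 : m 0 = [b]) (hm1 : m 1 = List.replicate (s 1 - 1) b ++ [a])
    (hmr : ∀ k : ℕ, 1 ≤ k →
      m (k + 1) = (List.replicate (s (k + 1)) (m k)).flatten ++ m (k - 1)) (k : ℕ) :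
    R m (k + 2) * R m (k + 1) * Ci a b (k + 1) =
      R m (k + 1) * R m (k + 2) * Ci a b (k + 2) := by
  induction k with
  | zero =>
    have e2 : R m 2 = R m 1 ^ s 2 * R m 0 := hRrec hmr 0
    have hc1 : Ci a b 1 = Ai (a:ℚ) * Ai (b:ℚ) := by simp [Ci]
    have hc2 : Ci a b 2 = Ai (b:ℚ) * Ai (a:ℚ) := by simp [Ci]
    show R m 2 * R m 1 * Ci a b 1 = R m 1 * R m 2 * Ci a b 2
    rw [e2, hc1, hc2, mul_assoc (R m 1)]
    conv_rhs => rw [mul_assoc (R m 1 ^ s 2), swap_pow]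
    rw [hR0 hm0, hR1 hm1]
    simp only [mul_assoc, swap_pow, AAi_cancel, AiA_cancel, AAi, AiA, mul_one]
  | succ k ih =>
    have e3 : R m (k + 3) = R m (k + 2) ^ s (k + 3) * R m (k + 1) := hRrec hmr (k + 1)
    have ih' : R m (k + 1) * R m (k + 2) * Ci a b (k + 2) =
        R m (k + 2) * R m (k + 1) * Ci a b (k + 1) := ih.symm
    show R m (k + 3) * R m (k + 2) * Ci a b (k + 2) = R m (k + 2) * R m (k + 3) * Ci a b (k + 3)
    calc R m (k + 3) * R m (k + 2) * Ci a b (k + 2)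
        = R m (k + 2) ^ s (k + 3) * (R m (k + 1) * R m (k + 2) * Ci a b (k + 2)) := by
          rw [e3]; simp only [mul_assoc]
      _ = R m (k + 2) ^ s (k + 3) * (R m (k + 2) * R m (k + 1) * Ci a b (k + 1)) := by rw [ih']
      _ = R m (k + 2) * R m (k + 3) * Ci a b (k + 3) := by
          rw [e3, show Ci a b (k + 3) = Ci a b (k + 1) from Ci_add_two a b (k + 1),
            mul_assoc (R m (k + 2)), swap_pow]
          simp only [mul_assoc]

lemma hWrec (hmr : ∀ k : ℕ, 1 ≤ k →
      m (k + 1) = (List.replicate (s (k + 1)) (m k)).flatten ++ m (k - 1)) (k : ℕ) :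
    W a b m (k + 2) = R m (k + 1) ^ s (k + 2) * W a b m k := by
  rw [W, W, hRrec hmr k, Ci_add_two, mul_assoc]

lemma hWX (hm0 : m 0 = [b]) (hm1 : m 1 = List.replicate (s 1 - 1) b ++ [a])
    (hmr : ∀ k : ℕ, 1 ≤ k →
      m (k + 1) = (List.replicate (s (k + 1)) (m k)).flatten ++ m (k - 1)) (k : ℕ) :
    R m (k + 2) * W a b m (k + 1) = R m (k + 1) ^ (s (k + 2) + 1) * W a b m k := by
  rw [W, ← mul_assoc, lemX hm0 hm1 hmr k, W, hRrec hmr k, Ci_add_two,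
    mul_assoc (R m (k + 1)), mul_assoc (R m (k + 1) ^ s (k + 2)), swap_pow, pow_succ]
  simp only [mul_assoc]

lemma hW1 (hm1 : m 1 = List.replicate (s 1 - 1) b ++ [a]) :
    W a b m 1 = Aq (b : ℚ) ^ (s 1 - 1) * Ai (b : ℚ) := by
  rw [W, hR1 hm1, show Ci a b 1 = Ai (a:ℚ) * Ai (b:ℚ) from by simp [Ci]]
  simp only [mul_assoc, AAi_cancel]

lemma hW2 (hm0 : m 0 = [b])
    (hmr : ∀ k : ℕ, 1 ≤ k →
      m (k + 1) = (List.replicate (s (k + 1)) (m k)).flatten ++ m (k - 1)) :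
    W a b m 2 = R m 1 ^ s 2 * Ai (a : ℚ) := by
  rw [W, hRrec hmr 0, hR0 hm0, show Ci a b 2 = Ai (b:ℚ) * Ai (a:ℚ) from by simp [Ci]]
  simp only [mul_assoc, AAi_cancel]

lemma hRW1 (hm0 : m 0 = [b]) (hm1 : m 1 = List.replicate (s 1 - 1) b ++ [a])
    (hmr : ∀ k : ℕ, 1 ≤ k →
      m (k + 1) = (List.replicate (s (k + 1)) (m k)).flatten ++ m (k - 1)) :
    R m 2 * W a b m 1 = R m 1 ^ (s 2 + 1) * Ai (a : ℚ) := by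
  rw [hRrec hmr 0, hR0 hm0, hW1 hm1, pow_succ, mul_assoc (R m 1 ^ s 2), hR1 hm1]
  simp only [mul_assoc, swap_pow, AAi_cancel, AAi, mul_one]

lemma base_det (α β : ℚ) : D3 (tq (Ai β)) (tq 1) (tq (Ai α)) = α - β := by
  simp [D3, tq, Ai, Matrix.det_fin_three, Matrix.one_apply]
  ring

lemma Ebase (hm0 : m 0 = [b]) (hm1 : m 1 = List.replicate (s 1 - 1) b ++ [a])
    (hmr : ∀ k : ℕ, 1 ≤ k →
      m (k + 1) = (List.replicate (s (k + 1)) (m k)).flatten ++ m (k - 1)) :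
    D3 (tq (W a b m 1)) (tq (R m 2 * W a b m 1)) (tq (W a b m 2)) = (b:ℚ) - a ∨
    D3 (tq (W a b m 1)) (tq (R m 2 * W a b m 1)) (tq (W a b m 2)) = (a:ℚ) - b := by
  rw [hRW1 hm0 hm1 hmr, hW2 hm0 hmr, chain_fst]
  rw [show R m 1 * Ai (a:ℚ) = Aq (b:ℚ) ^ (s 1 - 1 + 1) * Ai (b:ℚ) from by
    rw [hR1 hm1, mul_assoc, AAi, mul_one, pow_succ, mul_assoc, AAi, mul_one]]
  rw [hW1 hm1, chain_lst, AAi, base_det, det_Aq]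
  rcases pm_pow (detR m 1) (s 2) with h | h <;>
    rcases pm_pow (show (-1 : ℚ) = 1 ∨ (-1 : ℚ) = -1 from Or.inr rfl) (s 1 - 1) with h' | h' <;>
    rw [h, h']
  · right; ring
  · left; ring
  · left; ring
  · right; ring

lemma Emain (hm0 : m 0 = [b]) (hm1 : m 1 = List.replicate (s 1 - 1) b ++ [a])
    (hmr : ∀ k : ℕ, 1 ≤ k →
      m (k + 1) = (List.replicate (s (k + 1)) (m k)).flatten ++ m (k - 1)) (k : ℕ) :
    D3 (tq (W a b m (k+1))) (tq (R m (k+2) * W a b m (k+1))) (tq (W a b m (k+2))) = (b:ℚ) - a ∨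
    D3 (tq (W a b m (k+1))) (tq (R m (k+2) * W a b m (k+1))) (tq (W a b m (k+2))) = (a:ℚ) - b := by
  induction k with
  | zero => exact Ebase hm0 hm1 hmr
  | succ k ih =>
    rw [hWX hm0 hm1 hmr (k + 1), hWrec hmr (k + 1), chain_fst,
      D3_swap13 (tq (W a b m (k + 2)))]
    rcases pm_pow (detR m (k + 2)) (s (k + 3)) with h | h <;> rcases ih with h' | h' <;>
      rw [h, h']
    · right; ring
    · left; ring
    · left; ring
    · right; ring

lemma ends (hs : ∀ k, 1 ≤ s k) (hm0 : m 0 = [b])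
    (hm1 : m 1 = List.replicate (s 1 - 1) b ++ [a])
    (hmr : ∀ k : ℕ, 1 ≤ k →
      m (k + 1) = (List.replicate (s (k + 1)) (m k)).flatten ++ m (k - 1)) :
    ∀ k, ∃ p, m (k + 2) = p ++ (if Even k then [a, b] else [b, a]) := by
  have hP0 : ∃ p, m 2 = p ++ [a, b] := by
    have h2 : m 2 = (List.replicate (s 2) (m 1)).flatten ++ m 0 := by
      have h0 := hmr 1 le_rfl
      norm_num at h0
      exact h0
    obtain ⟨n2, hn2⟩ : ∃ t, s 2 = t + 1 := ⟨s 2 - 1, by have := hs 2; omega⟩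
    refine ⟨(List.replicate n2 (m 1)).flatten ++ List.replicate (s 1 - 1) b, ?_⟩
    rw [h2, hn2, List.replicate_succ', List.flatten_append, hm0, hm1]
    simp [List.append_assoc]
  have hP1 : ∃ p, m 3 = p ++ [b, a] := by
    have h3 : m 3 = (List.replicate (s 3) (m 2)).flatten ++ m 1 := by
      have h0 := hmr 2 (by omega)
      norm_num at h0
      exact h0
    rcases Nat.lt_or_ge 1 (s 1) with hgt | hle
    · obtain ⟨q', hq'⟩ : ∃ t, s 1 - 1 = t + 1 := ⟨s 1 - 2, by omega⟩
      refine ⟨(List.replicate (s 3) (m 2)).flatten ++ List.replicate q' b, ?_⟩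
      rw [h3, hm1, hq', List.replicate_succ']
      simp [List.append_assoc]
    · have hs1 : s 1 = 1 := le_antisymm hle (hs 1)
      have hm1' : m 1 = [a] := by rw [hm1, hs1]; simp
      obtain ⟨n3, hn3⟩ : ∃ t, s 3 = t + 1 := ⟨s 3 - 1, by have := hs 3; omega⟩
      obtain ⟨p0, hp0⟩ := hP0
      refine ⟨(List.replicate n3 (m 2)).flatten ++ (p0 ++ [a]), ?_⟩
      rw [h3, hn3, List.replicate_succ', List.flatten_append, hm1', hp0]
      simp [List.append_assoc]
  have main : ∀ k, (∃ p, m (k + 2) = p ++ (if Even k then [a, b] else [b, a])) ∧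
      (∃ p, m (k + 3) = p ++ (if Even (k + 1) then [a, b] else [b, a])) := by
    intro k
    induction k with
    | zero =>
      constructor
      · simpa using hP0
      · simpa [Nat.even_add_one] using hP1
    | succ k ih =>
      refine ⟨ih.2, ?_⟩
      obtain ⟨p, hp⟩ := ih.1
      have h4 : m (k + 4) = (List.replicate (s (k + 4)) (m (k + 3))).flatten ++ m (k + 2) := by
        have h0 := hmr (k + 3) (by omega)
        rw [show k + 3 - 1 = k + 2 from rfl] at h0
        exact h0
      have hiff : Even (k + 1 + 1) ↔ Even k := by simp [Nat.even_add_one]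
      refine ⟨(List.replicate (s (k + 4)) (m (k + 3))).flatten ++ p, ?_⟩
      rw [show k + 1 + 3 = k + 4 from rfl, h4, hp]
      by_cases he : Even k
      · simp only [if_pos he, if_pos (hiff.mpr he)]
        simp [List.append_assoc]
      · simp only [if_neg he, if_neg (fun hcon => he (hiff.mp hcon))]
        simp [List.append_assoc]
  exact fun k => (main k).1

lemma hWword (hs : ∀ k, 1 ≤ s k) (hm0 : m 0 = [b])
    (hm1 : m 1 = List.replicate (s 1 - 1) b ++ [a])
    (hmr : ∀ k : ℕ, 1 ≤ k →
      m (k + 1) = (List.replicate (s (k + 1)) (m k)).flatten ++ m (k - 1)) (k : ℕ) :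
    castM (wordMatrix ((m (k + 2)).dropLast.dropLast)) = W a b m (k + 2) := by
  obtain ⟨p, hp⟩ := ends hs hm0 hm1 hmr k
  rcases Nat.even_or_odd k with he | ho
  · rw [if_pos he] at hp
    rw [show (m (k + 2)).dropLast.dropLast = p from by rw [hp]; exact drop2 p a b]
    have hRk : R m (k + 2) = castM (wordMatrix p) * (Aq (a:ℚ) * Aq (b:ℚ)) := by
      rw [R, hp, wm_append, wm_pair, _root_.map_mul, _root_.map_mul, castM_single, castM_single]
    rw [W, hRk, show Ci a b (k + 2) = Ai (b:ℚ) * Ai (a:ℚ) from by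
      rw [Ci_add_two]; simp [Ci, he]]
    simp only [mul_assoc, AAi_cancel, AAi, mul_one]
  · rw [if_neg (Nat.not_even_iff_odd.mpr ho)] at hp
    rw [show (m (k + 2)).dropLast.dropLast = p from by rw [hp]; exact drop2 p b a]
    have hRk : R m (k + 2) = castM (wordMatrix p) * (Aq (b:ℚ) * Aq (a:ℚ)) := by
      rw [R, hp, wm_append, wm_pair, _root_.map_mul, _root_.map_mul, castM_single, castM_single]
    rw [W, hRk, show Ci a b (k + 2) = Ai (a:ℚ) * Ai (b:ℚ) from by
      rw [Ci_add_two]; simp [Ci, Nat.not_even_iff_odd.mpr ho]]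
    simp only [mul_assoc, AAi_cancel, AAi, mul_one]

end
end Stmt18aux

/-- Lemma 7.1 (ii): for the Sturmian words `m_k` on distinct positive integers
`a ≠ b`, with `x_{ℓ_k} = M'_k`, `x_{ℓ_k+1} = M_k M'_{k-1}`,
`x_{ℓ_k+2} = M_k² M'_{k-1}`, one has
`det(x_{ℓ_k}, x_{ℓ_k+1}, x_{ℓ_k+2}) = ±(b-a)`; in particular these three
points are linearly independent over `ℚ`. -/
theorem stmt18 (a b : ℤ) (ha : 0 < a) (hb : 0 < b) (hab : a ≠ b)
    (s : ℕ → ℕ) (hs : ∀ k, 1 ≤ s k) (m : ℕ → List ℤ)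
    (hm0 : m 0 = [b]) (hm1 : m 1 = List.replicate (s 1 - 1) b ++ [a])
    (hmr : ∀ k : ℕ, 1 ≤ k →
      m (k + 1) = (List.replicate (s (k + 1)) (m k)).flatten ++ m (k - 1)) :
    ∀ k : ℕ, 3 ≤ k →
      ((Matrix.of ![triple (wordMatrix ((m k).dropLast.dropLast)),
          triple (wordMatrix (m k) * wordMatrix ((m (k - 1)).dropLast.dropLast)),
          triple (wordMatrix (m k) * wordMatrix (m k) *
            wordMatrix ((m (k - 1)).dropLast.dropLast))]).det = b - a ∨
       (Matrix.of ![triple (wordMatrix ((m k).dropLast.dropLast)),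
          triple (wordMatrix (m k) * wordMatrix ((m (k - 1)).dropLast.dropLast)),
          triple (wordMatrix (m k) * wordMatrix (m k) *
            wordMatrix ((m (k - 1)).dropLast.dropLast))]).det = a - b) ∧
      LinearIndependent ℚ
        ![(fun i => (triple (wordMatrix ((m k).dropLast.dropLast)) i : ℚ)),
          (fun i => (triple (wordMatrix (m k) *
            wordMatrix ((m (k - 1)).dropLast.dropLast)) i : ℚ)),
          (fun i => (triple (wordMatrix (m k) * wordMatrix (m k) *
            wordMatrix ((m (k - 1)).dropLast.dropLast)) i : ℚ))] := by
  open Stmt18aux in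
  intro k hk
  obtain ⟨j, rfl⟩ : ∃ j, k = j + 3 := ⟨k - 3, by omega⟩
  simp only [show j + 3 - 1 = j + 2 from rfl]
  have hc0 : castM (wordMatrix ((m (j + 3)).dropLast.dropLast)) = W a b m (j + 3) :=
    hWword hs hm0 hm1 hmr (j + 1)
  have hcY : castM (wordMatrix ((m (j + 2)).dropLast.dropLast)) = W a b m (j + 2) :=
    hWword hs hm0 hm1 hmr j
  have hc1 : castM (wordMatrix (m (j + 3)) * wordMatrix ((m (j + 2)).dropLast.dropLast)) =
      R m (j + 3) * W a b m (j + 2) := by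
    rw [_root_.map_mul, hcY]; rfl
  have hc2 : castM (wordMatrix (m (j + 3)) * wordMatrix (m (j + 3)) *
      wordMatrix ((m (j + 2)).dropLast.dropLast)) =
      R m (j + 3) * R m (j + 3) * W a b m (j + 2) := by
    rw [_root_.map_mul, _root_.map_mul, hcY]; rfl
  have hdet3 : ∀ (Z0 Z1 Z2 : Matrix (Fin 2) (Fin 2) ℤ),
      (((Matrix.of ![triple Z0, triple Z1, triple Z2]).det : ℤ) : ℚ) =
        D3 (tq (castM Z0)) (tq (castM Z1)) (tq (castM Z2)) := by
    intro Z0 Z1 Z2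
    have h1 := RingHom.map_det (Int.castRingHom ℚ) (Matrix.of ![triple Z0, triple Z1, triple Z2])
    simp only [Int.coe_castRingHom] at h1
    rw [h1, D3]
    congr 1
    ext i jj
    fin_cases i <;> fin_cases jj <;>
      simp [triple, tq, castM, RingHom.mapMatrix_apply, Matrix.map_apply]
  have hCH : R m (j + 3) * R m (j + 3) * W a b m (j + 2) =
      (R m (j + 3)).trace • (R m (j + 3) * W a b m (j + 2)) -
        (R m (j + 3)).det • W a b m (j + 2) := by
    rw [CH2 (R m (j + 3)), sub_mul, Matrix.smul_mul, Matrix.smul_mul, one_mul]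
  have hE : D3 (tq (W a b m (j + 2))) (tq (R m (j + 3) * W a b m (j + 2)))
      (tq (W a b m (j + 3))) = (b : ℚ) - a ∨
      D3 (tq (W a b m (j + 2))) (tq (R m (j + 3) * W a b m (j + 2)))
      (tq (W a b m (j + 3))) = (a : ℚ) - b := Emain hm0 hm1 hmr (j + 1)
  have hval : D3 (tq (W a b m (j + 3))) (tq (R m (j + 3) * W a b m (j + 2)))
      (tq (R m (j + 3) * R m (j + 3) * W a b m (j + 2))) = (b : ℚ) - a ∨
      D3 (tq (W a b m (j + 3))) (tq (R m (j + 3) * W a b m (j + 2)))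
      (tq (R m (j + 3) * R m (j + 3) * W a b m (j + 2))) = (a : ℚ) - b := by
    rw [hCH, D3_last, D3_swap13 (tq (W a b m (j + 3)))]
    rcases detR m (j + 3) with h | h <;> rcases hE with h' | h' <;> rw [h, h']
    · left; ring
    · right; ring
    · right; ring
    · left; ring
  have hQ := hdet3 (wordMatrix ((m (j + 3)).dropLast.dropLast))
    (wordMatrix (m (j + 3)) * wordMatrix ((m (j + 2)).dropLast.dropLast))
    (wordMatrix (m (j + 3)) * wordMatrix (m (j + 3)) *
      wordMatrix ((m (j + 2)).dropLast.dropLast))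
  rw [hc0, hc1, hc2] at hQ
  constructor
  · rcases hval with h | h <;> rw [h] at hQ
    · left; exact_mod_cast hQ
    · right; exact_mod_cast hQ
  · have hne : D3 (tq (W a b m (j + 3))) (tq (R m (j + 3) * W a b m (j + 2)))
        (tq (R m (j + 3) * R m (j + 3) * W a b m (j + 2))) ≠ 0 := by
      have hab' : (a : ℚ) ≠ (b : ℚ) := by exact_mod_cast hab
      rcases hval with h | h <;> rw [h] <;> intro hcon <;> apply hab' <;> linarith
    set Mq : Matrix (Fin 3) (Fin 3) ℚ :=
      Matrix.of ![tq (W a b m (j + 3)), tq (R m (j + 3) * W a b m (j + 2)),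
        tq (R m (j + 3) * R m (j + 3) * W a b m (j + 2))] with hMq
    have hli : LinearIndependent ℚ (fun i => Mq i) :=
      Matrix.linearIndependent_rows_iff_isUnit.mpr
        ((Matrix.isUnit_iff_isUnit_det Mq).mpr (isUnit_iff_ne_zero.mpr hne))
    have heq : ![(fun i => (triple (wordMatrix ((m (j + 3)).dropLast.dropLast)) i : ℚ)),
          (fun i => (triple (wordMatrix (m (j + 3)) *
            wordMatrix ((m (j + 2)).dropLast.dropLast)) i : ℚ)),
          (fun i => (triple (wordMatrix (m (j + 3)) * wordMatrix (m (j + 3)) *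
            wordMatrix ((m (j + 2)).dropLast.dropLast)) i : ℚ))] = (fun i => Mq i) := by
      rw [hMq, ← hc0, ← hc1, ← hc2]
      funext i
      fin_cases i <;> funext jj <;> fin_cases jj <;>
        simp [triple, tq, castM, RingHom.mapMatrix_apply, Matrix.map_apply]
    rw [heq]
    exact hli
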